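/- Let T be an n×n complex matrix and let 0 ≤ γ ≤ π. Suppose that for every nonzero x ∈ EuclideanSpace ℂ (Fin n) one has Re ⟪T·x, x⟫ ≥ cos γ · ‖T·x‖ · ‖x‖ and Re ⟪Tᴴ·x, x⟫ ≥ cos γ · ‖Tᴴ·x‖ · ‖x‖, where Tᴴ is the conjugate transpose. Then every eigenvalue z of T satisfies |arg z| ≤ γ, where arg is the principal argument in (−π, π]. -/

import Mathlib

open scoped Matrix.Norms.L2Operator

/-- If for every nonzero `x` the angles between `T x` and `x` and between `Tᴴ x` and `x` are at
most `γ` (with `0 ≤ γ ≤ π`), then every eigenvalue `z` of `T` satisfies `|arg z| ≤ γ`. -/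
theorem eigenvalue_arg_bound {n : ℕ} (T : Matrix (Fin n) (Fin n) ℂ) (γ : ℝ)
    (hγ0 : 0 ≤ γ) (hγπ : γ ≤ Real.pi)
    (h1 : ∀ x : EuclideanSpace ℂ (Fin n), x ≠ 0 →
      Real.cos γ * ‖Matrix.toEuclideanLin T x‖ * ‖x‖ ≤
        (inner ℂ (Matrix.toEuclideanLin T x) x : ℂ).re)
    (h2 : ∀ x : EuclideanSpace ℂ (Fin n), x ≠ 0 →
      Real.cos γ * ‖Matrix.toEuclideanLin T.conjTranspose x‖ * ‖x‖ ≤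
        (inner ℂ (Matrix.toEuclideanLin T.conjTranspose x) x : ℂ).re)
    (z : ℂ) (hz : T.charpoly.IsRoot z) :
    |z.arg| ≤ γ := by
  -- charpoly eval: det (z • 1 - T) = 0
  have hdet : (z • (1 : Matrix (Fin n) (Fin n) ℂ) - T).det = 0 := by
    have h0 : ((Polynomial.evalRingHom z).mapMatrix T.charmatrix).det = 0 := by
      rw [← RingHom.map_det]
      exact hz
    rw [RingHom.mapMatrix_apply] at h0
    have heq : (T.charmatrix.map (Polynomial.evalRingHom z)) = z • 1 - T := by
      ext i j
      by_cases h : i = j <;>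
        simp [h, Matrix.charmatrix_apply, Matrix.map_apply,
          Matrix.diagonal_apply, Matrix.one_apply, Matrix.smul_apply]
    rwa [heq] at h0
  obtain ⟨v, hv0, hv⟩ := (Matrix.exists_mulVec_eq_zero_iff).mpr hdet
  have hTv : T.mulVec v = z • v := by
    have := hv
    rw [Matrix.sub_mulVec, Matrix.smul_mulVec, Matrix.one_mulVec, sub_eq_zero] at this
    exact this.symm
  -- transfer to EuclideanSpace
  set x : EuclideanSpace ℂ (Fin n) := (WithLp.equiv 2 (Fin n → ℂ)).symm v with hx
  have hx0 : x ≠ 0 := by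
    simpa [hx] using hv0
  have hTx : Matrix.toEuclideanLin T x = z • x := by
    rw [hx, WithLp.equiv_symm_apply, Matrix.toEuclideanLin_toLp, Matrix.toLin'_apply, hTv]
    rfl
  have key := h1 x hx0
  rw [hTx] at key
  have hnorm : ‖(z • x : EuclideanSpace ℂ (Fin n))‖ = ‖z‖ * ‖x‖ := by
    simp [norm_smul]
  have hinner : ((inner ℂ (z • x) x : ℂ)).re = z.re * ‖x‖ ^ 2 := by
    rw [inner_smul_left, inner_self_eq_norm_sq_to_K]
    have hc : (@RCLike.ofReal ℂ _ ‖x‖) = Complex.ofReal ‖x‖ := rfl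
    rw [Complex.mul_re, hc, ← Complex.ofReal_pow, Complex.ofReal_re, Complex.ofReal_im]
    simp [Complex.conj_re, Complex.conj_im]
  rw [hnorm, hinner] at key
  have hxpos : (0:ℝ) < ‖x‖ := norm_pos_iff.mpr hx0
  have hkey : Real.cos γ * ‖z‖ ≤ z.re := by
    have h' : Real.cos γ * ‖z‖ * (‖x‖ * ‖x‖) ≤ z.re * (‖x‖ * ‖x‖) := by
      nlinarith [key, sq_nonneg ‖x‖]
    exact le_of_mul_le_mul_right h' (by positivity)
  rcases eq_or_ne z 0 with rfl | hz0
  · simpa [Complex.arg_zero] using hγ0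
  · have habs : (0:ℝ) < ‖z‖ := norm_pos_iff.mpr hz0
    have hcos : Real.cos γ ≤ Real.cos z.arg := by
      have := Complex.cos_arg hz0
      rw [this]
      rw [le_div_iff₀ habs]
      linarith [hkey]
    by_contra hcon
    push_neg at hcon
    have h1' : Real.cos |z.arg| < Real.cos γ := by
      apply Real.cos_lt_cos_of_nonneg_of_le_pi hγ0 _ hcon
      exact Complex.abs_arg_le_pi z
    rw [Real.cos_abs] at h1'
    linarith
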